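/- Let T : ℓ²(ℕ, ℝ) → ℓ²(ℕ, ℝ) be a continuous linear map such that the family (j, k) ↦ |⟨T e_k, e_j⟩| of absolute values of matrix entries (with respect to the standard orthonormal basis (e_k)) is summable, with total sum S. Then for every Hilbert basis (φ_n) of ℓ²(ℕ, ℝ), the sum ∑_n |⟨T φ_n, φ_n⟩| converges and is at most S. -/

import Mathlib

set_option maxHeartbeats 1000000

open scoped InnerProductSpace

/-- If `T : ℓ²(ℕ,ℝ) → ℓ²(ℕ,ℝ)` is a continuous linear map whose family of
absolute values of matrix entries `(j,k) ↦ |⟨T e_k, e_j⟩|` (in the standard orthonormal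
basis) is summable with total sum `S`, then for every Hilbert basis `(φ_n)` of `ℓ²(ℕ,ℝ)`
the sum `∑_n |⟪T φ_n, φ_n⟫| converges and is at most `S`. -/
theorem diag_abs_summable_of_entries_summable
    (T : lp (fun _ : ℕ => ℝ) 2 →L[ℝ] lp (fun _ : ℕ => ℝ) 2) (S : ℝ)
    (hS : HasSum (fun jk : ℕ × ℕ =>
      |⟪T (lp.single 2 jk.2 (1 : ℝ)), lp.single 2 jk.1 (1 : ℝ)⟫_ℝ|) S)
    (φ : HilbertBasis ℕ ℝ (lp (fun _ : ℕ => ℝ) 2)) :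
    Summable (fun n : ℕ => |⟪T (φ n), φ n⟫_ℝ|) ∧
      ∑' n : ℕ, |⟪T (φ n), φ n⟫_ℝ| ≤ S := by
  classical
  set E := lp (fun _ : ℕ => ℝ) 2 with hE
  let e : ℕ → E := fun k => lp.single 2 k (1 : ℝ)
  let a : ℕ → ℕ → ℝ := fun j k => ⟪T (e k), e j⟫_ℝ
  -- coordinates
  have coord : ∀ (x : E) (j : ℕ), ⟪x, e j⟫_ℝ = x j := by
    intro x j
    have := lp.inner_single_right (𝕜 := ℝ) j (1 : ℝ) x
    simpa [RCLike.inner_apply] using this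
  have coord' : ∀ (x : E) (j : ℕ), ⟪e j, x⟫_ℝ = x j := by
    intro x j; rw [real_inner_comm]; exact coord x j
  -- coefficients bound
  have hφcoe : ∀ (n k : ℕ), |(φ n : E) k| ≤ 1 := by
    intro n k
    have h1 : ‖(φ n : E) k‖ ≤ ‖(φ n : E)‖ :=
      lp.norm_apply_le_norm two_ne_zero (φ n : E) k
    have h2 : ‖(φ n : E)‖ = 1 := φ.orthonormal.1 n
    rw [h2] at h1
    simpa [Real.norm_eq_abs] using h1
  -- summability of |a j k| in various index orders
  have hA : Summable fun jk : ℕ × ℕ => |a jk.1 jk.2| := hS.summable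
  have hA' : Summable fun kj : ℕ × ℕ => |a kj.2 kj.1| := hA.prod_symm
  -- the dominating family for each n
  set h : ℕ → ℕ × ℕ → ℝ :=
    fun n kj => |a kj.2 kj.1| * |(φ n : E) kj.1| * |(φ n : E) kj.2| with hh_def
  have hh_nonneg : ∀ n kj, 0 ≤ h n kj := fun n kj => by positivity
  have hh_le : ∀ n kj, h n kj ≤ |a kj.2 kj.1| := by
    intro n kj
    calc |a kj.2 kj.1| * |(φ n : E) kj.1| * |(φ n : E) kj.2|
        ≤ |a kj.2 kj.1| * 1 * 1 := by
          apply mul_le_mul (mul_le_mul le_rfl (hφcoe n kj.1) (abs_nonneg _) (abs_nonneg _))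
            (hφcoe n kj.2) (abs_nonneg _)
          positivity
      _ = |a kj.2 kj.1| := by ring
  have hhsum : ∀ n, Summable (h n) := fun n =>
    Summable.of_nonneg_of_le (hh_nonneg n) (hh_le n) hA'
  -- expansion of ⟪T (e k), φ n⟫ over j
  have hTekφ : ∀ (n k : ℕ), HasSum (fun j => a j k * (φ n : E) j) ⟪T (e k), φ n⟫_ℝ := by
    intro n k
    have := lp.hasSum_inner (𝕜 := ℝ) (T (e k)) (φ n : E)
    have base : HasSum (fun j => (T (e k) : E) j * (φ n : E) j) ⟪T (e k), φ n⟫_ℝ := by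
      simpa [RCLike.inner_apply, mul_comm] using this
    refine base.congr_fun fun j => ?_
    have : a j k = (T (e k) : E) j := coord (T (e k)) j
    rw [this]
  have hAk : ∀ k, Summable fun j => |a j k| := fun k => hA.prod_symm.prod_factor k
  have hTekφ_abs : ∀ (n k : ℕ),
      |⟪T (e k), φ n⟫_ℝ| ≤ ∑' j, |a j k| * |(φ n : E) j| := by
    intro n k
    have hsab : Summable fun j => |a j k| * |(φ n : E) j| :=
      Summable.of_nonneg_of_le (fun j => by positivity)
        (fun j => by
          calc |a j k| * |(φ n : E) j| ≤ |a j k| * 1 :=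
                mul_le_mul_of_nonneg_left (hφcoe n j) (abs_nonneg _)
            _ = |a j k| := mul_one _) (hAk k)
    have := (hTekφ n k).tsum_eq
    rw [← this]
    have hn : Summable fun j => ‖a j k * (φ n : E) j‖ := by
      simpa [Real.norm_eq_abs, abs_mul] using hsab
    simpa [Real.norm_eq_abs, abs_mul] using norm_tsum_le_tsum_norm hn
  -- expansion of ⟪T (φ n), φ n⟫ over k
  have hexp : ∀ n, HasSum (fun k => (φ n : E) k * ⟪T (e k), φ n⟫_ℝ) ⟪T (φ n), φ n⟫_ℝ := by
    intro n
    have h1 : HasSum (fun k : ℕ => lp.single 2 k ((φ n : E) k)) (φ n : E) :=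
      lp.hasSum_single (by norm_num) (φ n : E)
    have h2 := (h1.mapL T).mapL (innerSL ℝ (φ n : E))
    have h3 : ∀ k : ℕ, (innerSL ℝ (φ n : E)) (T (lp.single 2 k ((φ n : E) k)))
        = (φ n : E) k * ⟪T (e k), φ n⟫_ℝ := by
      intro k
      have : lp.single (E := fun _ : ℕ => ℝ) 2 k ((φ n : E) k)
          = (φ n : E) k • lp.single 2 k (1 : ℝ) := by
        rw [← lp.single_smul]; norm_num
      rw [innerSL_apply_apply, this, map_smul, inner_smul_right, real_inner_comm]
    have h4 : (innerSL ℝ (φ n : E)) (T (φ n : E)) = ⟪T (φ n), φ n⟫_ℝ := by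
      rw [innerSL_apply_apply, real_inner_comm]
    rw [← h4]
    exact h2.congr_fun fun x => (h3 x).symm
  -- main pointwise bound
  have hmain : ∀ n, |⟪T (φ n), φ n⟫_ℝ| ≤ ∑' kj : ℕ × ℕ, h n kj := by
    intro n
    have hg : Summable fun k => ∑' j, h n (k, j) := (hhsum n).prod
    have hfk : ∀ k, |(φ n : E) k| * |⟪T (e k), φ n⟫_ℝ| ≤ ∑' j, h n (k, j) := by
      intro k
      calc |(φ n : E) k| * |⟪T (e k), φ n⟫_ℝ|
          ≤ |(φ n : E) k| * ∑' j, |a j k| * |(φ n : E) j| :=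
            mul_le_mul_of_nonneg_left (hTekφ_abs n k) (abs_nonneg _)
        _ = ∑' j, |(φ n : E) k| * (|a j k| * |(φ n : E) j|) := tsum_mul_left.symm
        _ = ∑' j, h n (k, j) := by
            apply tsum_congr; intro j; simp only [hh_def]; ring
    have hfabs : Summable fun k => |(φ n : E) k| * |⟪T (e k), φ n⟫_ℝ| :=
      Summable.of_nonneg_of_le (fun k => by positivity) hfk hg
    calc |⟪T (φ n), φ n⟫_ℝ| = |∑' k, (φ n : E) k * ⟪T (e k), φ n⟫_ℝ| := by
          rw [(hexp n).tsum_eq]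
      _ ≤ ∑' k, |(φ n : E) k| * |⟪T (e k), φ n⟫_ℝ| := by
          have hn : Summable fun k => ‖(φ n : E) k * ⟪T (e k), φ n⟫_ℝ‖ := by
            simpa [Real.norm_eq_abs, abs_mul] using hfabs
          simpa [Real.norm_eq_abs, abs_mul] using norm_tsum_le_tsum_norm hn
      _ ≤ ∑' k, ∑' j, h n (k, j) := Summable.tsum_le_tsum hfk hfabs hg
      _ = ∑' kj : ℕ × ℕ, h n kj := (Summable.tsum_prod (hhsum n)).symm
  -- Parseval: partial sums of squares of coefficients ≤ 1
  have hsq : ∀ (k : ℕ) (F : Finset ℕ), ∑ n ∈ F, ((φ n : E) k)^2 ≤ 1 := by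
    intro k F
    have h1 : HasSum (fun n => ⟪(e k : E), φ n⟫_ℝ * ⟪φ n, e k⟫_ℝ) ⟪(e k : E), e k⟫_ℝ :=
      φ.hasSum_inner_mul_inner (e k) (e k)
    have h2 : ∀ n, ⟪(e k : E), φ n⟫_ℝ * ⟪φ n, e k⟫_ℝ = ((φ n : E) k)^2 := by
      intro n; rw [coord' (φ n) k, coord (φ n) k]; ring
    have h3 : ⟪(e k : E), e k⟫_ℝ = 1 := by
      rw [coord (e k) k]
      simp [e, lp.single_apply_self]
    rw [h3] at h1
    exact sum_le_hasSum F (fun n _ => sq_nonneg _) (h1.congr_fun fun x => (h2 x).symm)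
  -- key finite-sum bound
  have hkey : ∀ F : Finset ℕ, ∑ n ∈ F, |⟪T (φ n), φ n⟫_ℝ| ≤ S := by
    intro F
    have step1 : ∑ n ∈ F, |⟪T (φ n), φ n⟫_ℝ| ≤ ∑ n ∈ F, ∑' kj : ℕ × ℕ, h n kj :=
      Finset.sum_le_sum fun n _ => hmain n
    have step2 : ∑ n ∈ F, ∑' kj : ℕ × ℕ, h n kj = ∑' kj : ℕ × ℕ, ∑ n ∈ F, h n kj :=
      (Summable.tsum_finsetSum fun n _ => hhsum n).symm
    have hcoef : ∀ kj : ℕ × ℕ, ∑ n ∈ F, |(φ n : E) kj.1| * |(φ n : E) kj.2| ≤ 1 := by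
      intro kj
      calc ∑ n ∈ F, |(φ n : E) kj.1| * |(φ n : E) kj.2|
          ≤ ∑ n ∈ F, (((φ n : E) kj.1)^2 + ((φ n : E) kj.2)^2) / 2 := by
            apply Finset.sum_le_sum; intro n _
            nlinarith [sq_nonneg (|(φ n : E) kj.1| - |(φ n : E) kj.2|),
              sq_abs ((φ n : E) kj.1), sq_abs ((φ n : E) kj.2),
              abs_nonneg ((φ n : E) kj.1), abs_nonneg ((φ n : E) kj.2)]
        _ = ((∑ n ∈ F, ((φ n : E) kj.1)^2) + ∑ n ∈ F, ((φ n : E) kj.2)^2) / 2 := by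
            rw [← Finset.sum_div, Finset.sum_add_distrib]
        _ ≤ (1 + 1) / 2 := by
            have h1 := hsq kj.1 F
            have h2 := hsq kj.2 F
            linarith
        _ = 1 := by norm_num
    have step3 : ∀ kj : ℕ × ℕ, ∑ n ∈ F, h n kj ≤ |a kj.2 kj.1| := by
      intro kj
      have : ∑ n ∈ F, h n kj
          = |a kj.2 kj.1| * ∑ n ∈ F, |(φ n : E) kj.1| * |(φ n : E) kj.2| := by
        rw [Finset.mul_sum]; apply Finset.sum_congr rfl; intro n _
        simp only [hh_def]; ring
      rw [this]
      calc |a kj.2 kj.1| * ∑ n ∈ F, |(φ n : E) kj.1| * |(φ n : E) kj.2|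
          ≤ |a kj.2 kj.1| * 1 := mul_le_mul_of_nonneg_left (hcoef kj) (abs_nonneg _)
        _ = _ := mul_one _
    have hsumF : Summable fun kj : ℕ × ℕ => ∑ n ∈ F, h n kj :=
      Summable.of_nonneg_of_le (fun kj => Finset.sum_nonneg fun n _ => hh_nonneg n kj)
        step3 hA'
    have hS' : HasSum (fun kj : ℕ × ℕ => |a kj.2 kj.1|) S := by
      exact (Equiv.prodComm ℕ ℕ).hasSum_iff.mpr hS
    calc ∑ n ∈ F, |⟪T (φ n), φ n⟫_ℝ| ≤ ∑' kj : ℕ × ℕ, ∑ n ∈ F, h n kj :=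
          step1.trans_eq step2
      _ ≤ ∑' kj : ℕ × ℕ, |a kj.2 kj.1| := Summable.tsum_le_tsum step3 hsumF hA'
      _ = S := hS'.tsum_eq
  refine ⟨summable_of_sum_le (fun n => abs_nonneg _) hkey, ?_⟩
  exact Summable.tsum_le_of_sum_le (summable_of_sum_le (fun n => abs_nonneg _) hkey) hkey
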